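/- Let C, B, C_κ > 0 with B > C_κ, and let E : [τ, t_final] → ℝ be a continuous nonnegative function satisfying E(t) ≤ C·exp(−B·t) + C_κ·∫_t^{t_final} E(s) ds for all t ∈ [τ, t_final]. Then E(τ) ≤ C·(1 + C_κ/(B − C_κ))·exp(−B·τ). -/

import Mathlib

open MeasureTheory Real Set

theorem backwards_gronwall_exponential
    (τ tfinal C B Cκ : ℝ) (E : ℝ → ℝ)
    (hC : 0 < C) (hB : 0 < B) (hCκ : 0 < Cκ) (hBC : Cκ < B)
    (hτ : τ ≤ tfinal)
    (hcont : ContinuousOn E (Icc τ tfinal))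
    (hnonneg : ∀ t ∈ Icc τ tfinal, 0 ≤ E t)
    (hineq : ∀ t ∈ Icc τ tfinal,
      E t ≤ C * Real.exp (-B * t) + Cκ * ∫ s in t..tfinal, E s) :
    E τ ≤ C * (1 + Cκ / (B - Cκ)) * Real.exp (-B * τ) := by
  have hBC' : 0 < B - Cκ := by linarith
  set φ : ℝ → ℝ := fun t => ∫ s in t..tfinal, E s with hφdef
  -- integrability
  have hint : ∀ a ∈ Icc τ tfinal, ∀ b ∈ Icc τ tfinal, IntervalIntegrable E volume a b := by
    intro a ha b hb
    exact (hcont.mono (uIcc_subset_Icc ha hb)).intervalIntegrable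
  have hIcc : uIcc τ tfinal = Icc τ tfinal := uIcc_of_le hτ
  have hφcont : ContinuousOn φ (Icc τ tfinal) := by
    rw [← hIcc]
    exact intervalIntegral.continuousOn_primitive_interval_left (by rw [hIcc]; exact hcont.integrableOn_Icc)
  -- derivative of φ at interior points
  have hφderiv : ∀ t ∈ Ioo τ tfinal, HasDerivAt φ (-E t) t := by
    intro t ht
    have htmem : t ∈ Icc τ tfinal := Ioo_subset_Icc_self ht
    have hEat : ContinuousAt E t :=
      hcont.continuousAt (Icc_mem_nhds ht.1 ht.2)
    have h1 : HasDerivAt (fun u => ∫ s in τ..u, E s) (E t) t :=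
      intervalIntegral.integral_hasDerivAt_right
        (hint τ (left_mem_Icc.2 hτ) t htmem)
        ⟨Icc τ tfinal, Icc_mem_nhds ht.1 ht.2, hcont.aestronglyMeasurable measurableSet_Icc⟩ hEat
    have h2 : ∀ u ∈ Icc τ tfinal, φ u = (∫ s in τ..tfinal, E s) - ∫ s in τ..u, E s := by
      intro u hu
      have := intervalIntegral.integral_add_adjacent_intervals
        (hint τ (left_mem_Icc.2 hτ) u hu) (hint u hu tfinal (right_mem_Icc.2 hτ))
      simp only [hφdef]
      linarith [this]
    have h3 : HasDerivAt (fun u => (∫ s in τ..tfinal, E s) - ∫ s in τ..u, E s) (-E t) t := by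
      exact h1.const_sub _
    exact h3.congr_of_eventuallyEq
      (Filter.eventuallyEq_of_mem (Icc_mem_nhds ht.1 ht.2) fun u hu => (h2 u hu))
  -- auxiliary function ψ
  set ψ : ℝ → ℝ := fun t => Real.exp (Cκ * t) * φ t - C / (B - Cκ) * Real.exp ((Cκ - B) * t)
    with hψdef
  have hψcont : ContinuousOn ψ (Icc τ tfinal) := by
    apply ContinuousOn.sub
    · exact (Real.continuous_exp.comp (continuous_const.mul continuous_id)).continuousOn.mul hφcont
    · exact (continuous_const.mul (Real.continuous_exp.comp
        (continuous_const.mul continuous_id))).continuousOn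
  set ψ' : ℝ → ℝ := fun t =>
    (Cκ * Real.exp (Cκ * t) * φ t + Real.exp (Cκ * t) * (-E t))
      - C / (B - Cκ) * ((Cκ - B) * Real.exp ((Cκ - B) * t)) with hψ'def
  have hintD : interior (Icc τ tfinal) = Ioo τ tfinal := interior_Icc
  have hψmono : MonotoneOn ψ (Icc τ tfinal) := by
    apply monotoneOn_of_hasDerivWithinAt_nonneg (convex_Icc _ _) hψcont (f' := ψ')
    · intro t ht
      rw [hintD] at ht
      have he : HasDerivAt (fun u => Real.exp (Cκ * u)) (Cκ * Real.exp (Cκ * t)) t := by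
        have := ((hasDerivAt_id t).const_mul Cκ).exp
        simpa [mul_comm] using this
      have he2 : HasDerivAt (fun u => Real.exp ((Cκ - B) * u))
          ((Cκ - B) * Real.exp ((Cκ - B) * t)) t := by
        have := ((hasDerivAt_id t).const_mul (Cκ - B)).exp
        simpa [mul_comm] using this
      exact (((he.mul (hφderiv t ht)).sub (he2.const_mul (C / (B - Cκ)))).hasDerivWithinAt)
    · intro t ht
      rw [hintD] at ht
      have htmem : t ∈ Icc τ tfinal := Ioo_subset_Icc_self ht
      have hE := hineq t htmem
      have hexp : Real.exp (Cκ * t) * Real.exp (-B * t) = Real.exp ((Cκ - B) * t) := by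
        rw [← Real.exp_add]; ring_nf
      have key : Real.exp (Cκ * t) * (Cκ * φ t - E t) ≥
          -C * Real.exp ((Cκ - B) * t) := by
        have h1 : Cκ * φ t - E t ≥ -(C * Real.exp (-B * t)) := by
          simp only [hφdef] at hE ⊢; linarith
        calc Real.exp (Cκ * t) * (Cκ * φ t - E t)
            ≥ Real.exp (Cκ * t) * (-(C * Real.exp (-B * t))) := by
              apply mul_le_mul_of_nonneg_left h1 (Real.exp_pos _).le
          _ = -C * Real.exp ((Cκ - B) * t) := by rw [← hexp]; ring
      have hCfrac : C / (B - Cκ) * (Cκ - B) = -C := by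
        field_simp
        ring
      simp only [hψ'def]
      have : C / (B - Cκ) * ((Cκ - B) * Real.exp ((Cκ - B) * t))
          = -C * Real.exp ((Cκ - B) * t) := by rw [← mul_assoc, hCfrac]
      rw [this]
      nlinarith [key]
  -- conclude φ τ ≤ C/(B-Cκ) * exp (-B τ)
  have hψle : ψ τ ≤ ψ tfinal :=
    hψmono (left_mem_Icc.2 hτ) (right_mem_Icc.2 hτ) hτ
  have hφtf : φ tfinal = 0 := intervalIntegral.integral_same
  have hψtf : ψ tfinal ≤ 0 := by
    simp only [hψdef, hφtf, mul_zero, zero_sub, neg_nonpos]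
    positivity
  have hφτ : φ τ ≤ C / (B - Cκ) * Real.exp (-B * τ) := by
    have h : Real.exp (Cκ * τ) * φ τ ≤ C / (B - Cκ) * Real.exp ((Cκ - B) * τ) := by
      have := hψle.trans hψtf
      simp only [hψdef] at this; linarith
    have hexp : Real.exp ((Cκ - B) * τ) = Real.exp (Cκ * τ) * Real.exp (-B * τ) := by
      rw [← Real.exp_add]; ring_nf
    rw [hexp] at h
    have hpos := Real.exp_pos (Cκ * τ)
    nlinarith [h]
  have hEτ := hineq τ (left_mem_Icc.2 hτ)
  have : E τ ≤ C * Real.exp (-B * τ) + Cκ * (C / (B - Cκ) * Real.exp (-B * τ)) := by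
    refine hEτ.trans ?_
    have : Cκ * φ τ ≤ Cκ * (C / (B - Cκ) * Real.exp (-B * τ)) :=
      mul_le_mul_of_nonneg_left hφτ hCκ.le
    simp only [hφdef] at this ⊢; linarith
  calc E τ ≤ C * Real.exp (-B * τ) + Cκ * (C / (B - Cκ) * Real.exp (-B * τ)) := this
    _ = C * (1 + Cκ / (B - Cκ)) * Real.exp (-B * τ) := by field_simp
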